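/- Let R be a fully symmetric 4-tensor on C^{2n}: i.e. σ(𝔕(ε¹,ε²)ε³, ε⁴) is symmetric in all four arguments, where 𝔕(ε,ε') = (1/2) Σ_{δ,γ} sign(δ) σ(𝔕(ε,ε')ε_γ, ε_{−δ}) x_{δγ}. Then in the representation π_a on Λ^a(C^{2n}) realized via the Clifford algebra, Σ_{α,β} sign(α) π_a(x_{αβ} 𝔕(ε_{−α}, ε_β)) = 0. -/

import Mathlib

/-- Index set `{±1, …, ±n}` realized as nonzero integers of absolute value at most `n`. -/
abbrev Idx (n : ℕ) := {i : ℤ // i ∈ (Finset.Icc (-(n : ℤ)) n).erase 0}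

/-- Negation on the index set. -/
def Idx.negI {n : ℕ} (α : Idx n) : Idx n :=
  ⟨-α.1, by
    have h := α.2
    simp only [Finset.mem_erase, Finset.mem_Icc] at h ⊢
    omega⟩

/-- The sign of a (nonzero) integer, as a complex scalar. -/
def sgn (a : ℤ) : ℂ := if 0 < a then 1 else -1

/-- The basis element `x_{αβ}` of `sp(n,ℂ)` acting on `ℂ^{2n}` by
`x_{αβ}(ε_ν) = δ_{β,ν} ε_α − sign(αβ) δ_{−α,ν} ε_{−β}`. -/
def spX {n : ℕ} (α β : Idx n) : Module.End ℂ (Idx n → ℂ) where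
  toFun v := fun μ => v β * (if μ = α then 1 else 0)
      - sgn (α.1 * β.1) * v α.negI * (if μ = β.negI then 1 else 0)
  map_add' u v := by funext μ; simp only [Pi.add_apply]; ring
  map_smul' c v := by
    funext μ; simp only [Pi.smul_apply, smul_eq_mul, RingHom.id_apply]; ring

/-- Exterior multiplication by the basis vector `ε_α`, as an operator on `Λ(ℂ^{2n})`. -/
noncomputable def epsOp {n : ℕ} (α : Idx n) :
    Module.End ℂ (ExteriorAlgebra ℂ (Idx n → ℂ)) :=
  LinearMap.mulLeft ℂ (ExteriorAlgebra.ι ℂ (Pi.single α 1))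

/-- Interior multiplication `ε_α† = i(ε_α*)` (contraction with the dual basis vector),
as an operator on `Λ(ℂ^{2n})`. -/
noncomputable def dagOp {n : ℕ} (α : Idx n) :
    Module.End ℂ (ExteriorAlgebra ℂ (Idx n → ℂ)) :=
  CliffordAlgebra.contractLeft ((Pi.basisFun ℂ (Idx n)).coord α)

lemma Idx.ne_zero {n : ℕ} (α : Idx n) : α.1 ≠ 0 := by
  have h := α.2; simp only [Finset.mem_erase] at h; exact h.1

lemma Idx.negI_negI {n : ℕ} (α : Idx n) : α.negI.negI = α := Subtype.ext (neg_neg _)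

lemma Idx.negI_val {n : ℕ} (α : Idx n) : (α.negI).1 = -α.1 := rfl

/-- Negation on the index set as an equivalence. -/
def negE (n : ℕ) : Idx n ≃ Idx n := ⟨Idx.negI, Idx.negI, Idx.negI_negI, Idx.negI_negI⟩

lemma sgn_neg {a : ℤ} (h : a ≠ 0) : sgn (-a) = -sgn a := by
  unfold sgn; split_ifs
  all_goals try norm_num
  all_goals omega

lemma sgn_mul_self (a : ℤ) : sgn a * sgn a = 1 := by unfold sgn; split_ifs <;> ring

lemma sgn_mul {a b : ℤ} (ha : a ≠ 0) (hb : b ≠ 0) : sgn (a*b) = sgn a * sgn b := by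
  unfold sgn
  rcases lt_trichotomy a 0 with h1|h1|h1 <;> rcases lt_trichotomy b 0 with h2|h2|h2 <;> split_ifs
  all_goals try ring
  all_goals exfalso; first | omega | nlinarith

section ops
variable {n : ℕ}

lemma eps_anticomm (α β : Idx n) : epsOp (n := n) α * epsOp β + epsOp β * epsOp α = 0 := by
  refine LinearMap.ext fun x => ?_
  simp only [epsOp, Module.End.mul_apply, LinearMap.mulLeft_apply, LinearMap.add_apply,
    LinearMap.zero_apply]
  rw [← mul_assoc, ← mul_assoc, ← add_mul, ExteriorAlgebra.ι_add_mul_swap, zero_mul]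

lemma dag_eps (q m : Idx n) :
    dagOp (n := n) q * epsOp m = ((if q = m then 1 else 0 : ℂ)) •
      (1 : Module.End ℂ (ExteriorAlgebra ℂ (Idx n → ℂ))) - epsOp m * dagOp q := by
  refine LinearMap.ext fun x => ?_
  simp only [dagOp, epsOp, Module.End.mul_apply, LinearMap.mulLeft_apply, LinearMap.sub_apply,
    LinearMap.smul_apply, Module.End.one_apply]
  rw [CliffordAlgebra.contractLeft_ι_mul]
  congr 2
  simp [Module.Basis.coord_apply, Pi.single_apply]

/-- The renormalized creation operator `e_p = sgn(p) ε_{−p}`. -/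
noncomputable def eOp {n : ℕ} (p : Idx n) : Module.End ℂ (ExteriorAlgebra ℂ (Idx n → ℂ)) :=
  sgn p.1 • epsOp p.negI

lemma e_anticomm (p r : Idx n) : eOp (n := n) p * eOp r + eOp r * eOp p = 0 := by
  unfold eOp
  rw [smul_mul_assoc, mul_smul_comm, smul_mul_assoc, mul_smul_comm, smul_smul, smul_smul,
    mul_comm (sgn r.1) (sgn p.1), ← smul_add, eps_anticomm, smul_zero]

lemma e_mul_comm (p r : Idx n) : eOp (n := n) r * eOp p = -(eOp p * eOp r) :=
  eq_neg_of_add_eq_zero_right (e_anticomm p r)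

lemma dag_e (q r : Idx n) :
    dagOp (n := n) q * eOp r = (sgn r.1 * (if q = r.negI then 1 else 0)) •
      (1 : Module.End ℂ (ExteriorAlgebra ℂ (Idx n → ℂ))) - eOp r * dagOp q := by
  unfold eOp
  rw [mul_smul_comm, dag_eps, smul_sub, smul_smul, smul_mul_assoc]

end ops

section sums
variable {M : Type*} [AddCommMonoid M] {ι : Type*} [Fintype ι]

lemma sum3_rot (g : ι → ι → ι → M) :
    (∑ q, ∑ r, ∑ s, g q r s) = ∑ r, ∑ s, ∑ q, g q r s := by
  rw [Finset.sum_comm]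
  exact Finset.sum_congr rfl fun _ _ => Finset.sum_comm

lemma sum4_swap13 (f : ι → ι → ι → ι → M) :
    (∑ p, ∑ q, ∑ r, ∑ s, f p q r s) = ∑ p, ∑ q, ∑ r, ∑ s, f r q p s := by
  rw [show (∑ p, ∑ q, ∑ r, ∑ s, f p q r s) = ∑ p, ∑ r, ∑ q, ∑ s, f p q r s from
    Finset.sum_congr rfl fun p _ => Finset.sum_comm, Finset.sum_comm]
  exact Finset.sum_congr rfl fun p _ => Finset.sum_comm

lemma sum4_swap12 (f : ι → ι → ι → ι → M) :
    (∑ p, ∑ q, ∑ r, ∑ s, f p q r s) = ∑ p, ∑ q, ∑ r, ∑ s, f q p r s :=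
  Finset.sum_comm

lemma sum4_swap34 (f : ι → ι → ι → ι → M) :
    (∑ p, ∑ q, ∑ r, ∑ s, f p q r s) = ∑ p, ∑ q, ∑ r, ∑ s, f p q s r :=
  Finset.sum_congr rfl fun _ _ => Finset.sum_congr rfl fun _ _ => Finset.sum_comm
end sums

section mainaux
variable {n : ℕ}

lemma scalar_sum_zero (S : Idx n → Idx n → Idx n → Idx n → ℂ)
    (h23 : ∀ p q r s, S p q r s = S p r q s) (p s : Idx n) :
    ∑ r : Idx n, S p r.negI r s * sgn r.1 = 0 := by
  have key : ∀ r : Idx n, S p ((negE n) r).negI ((negE n) r) s * sgn ((negE n) r).1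
      = -(S p r.negI r s * sgn r.1) := by
    intro r
    show S p (r.negI.negI) r.negI s * sgn ((r.negI).1) = _
    rw [Idx.negI_negI, Idx.negI_val, sgn_neg r.ne_zero, h23 p r r.negI s]
    ring
  have h : (∑ r : Idx n, S p r.negI r s * sgn r.1)
      = -∑ r : Idx n, S p r.negI r s * sgn r.1 :=
    calc (∑ r : Idx n, S p r.negI r s * sgn r.1)
        = ∑ r : Idx n, S p ((negE n) r).negI ((negE n) r) s * sgn ((negE n) r).1 :=
          (Equiv.sum_comp (negE n) (fun r : Idx n => S p r.negI r s * sgn r.1)).symm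
      _ = ∑ r : Idx n, -(S p r.negI r s * sgn r.1) := Finset.sum_congr rfl fun r _ => key r
      _ = -∑ r : Idx n, S p r.negI r s * sgn r.1 := Finset.sum_neg_distrib _
  linear_combination h / 2

lemma main_aux (S : Idx n → Idx n → Idx n → Idx n → ℂ)
    (h12 : ∀ p q r s, S p q r s = S q p r s)
    (h23 : ∀ p q r s, S p q r s = S p r q s)
    (h34 : ∀ p q r s, S p q r s = S p q s r) :
    (∑ p : Idx n, ∑ q : Idx n, ∑ r : Idx n, ∑ s : Idx n,
      S p q r s • (eOp p * (dagOp q * (eOp r * dagOp s)))) = 0 := by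
  have hrw : ∀ p q r s : Idx n, S p q r s • (eOp (n := n) p * (dagOp q * (eOp r * dagOp s)))
      = (S p q r s * (sgn r.1 * (if q = r.negI then 1 else 0))) • (eOp p * dagOp s)
        - S p q r s • (eOp p * (eOp r * (dagOp q * dagOp s))) := by
    intro p q r s
    rw [show dagOp (n := n) q * (eOp r * dagOp s) = (dagOp q * eOp r) * dagOp s from
      (mul_assoc _ _ _).symm, dag_e, sub_mul, smul_mul_assoc, one_mul, mul_sub, mul_smul_comm,
      smul_sub, smul_smul, mul_assoc (eOp r)]
  simp only [hrw, Finset.sum_sub_distrib]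
  have hP : (∑ p : Idx n, ∑ q : Idx n, ∑ r : Idx n, ∑ s : Idx n,
      (S p q r s * (sgn r.1 * (if q = r.negI then 1 else 0))) • (eOp (n := n) p * dagOp s)) = 0 := by
    refine Finset.sum_eq_zero fun p _ => ?_
    rw [sum3_rot]
    have collapse : ∀ r s : Idx n,
        (∑ q : Idx n, (S p q r s * (sgn r.1 * (if q = r.negI then 1 else 0))) •
          (eOp (n := n) p * dagOp s)) = (S p r.negI r s * sgn r.1) • (eOp p * dagOp s) := by
      intro r s
      simp only [mul_ite, mul_one, mul_zero, ite_smul, zero_smul]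
      rw [Finset.sum_ite_eq' Finset.univ r.negI]
      simp
    rw [Finset.sum_congr rfl fun r _ => Finset.sum_congr rfl fun s _ => collapse r s,
      Finset.sum_comm]
    refine Finset.sum_eq_zero fun s _ => ?_
    rw [← Finset.sum_smul, scalar_sum_zero S h23 p s, zero_smul]
  have hW : (∑ p : Idx n, ∑ q : Idx n, ∑ r : Idx n, ∑ s : Idx n,
      S p q r s • (eOp (n := n) p * (eOp r * (dagOp q * dagOp s)))) = 0 := by
    set W := ∑ p : Idx n, ∑ q : Idx n, ∑ r : Idx n, ∑ s : Idx n,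
      S p q r s • (eOp (n := n) p * (eOp r * (dagOp q * dagOp s))) with hWdef
    have h : W = -W := by
      conv_lhs => rw [hWdef,
        sum4_swap13 (fun p q r s => S p q r s • (eOp (n := n) p * (eOp r * (dagOp q * dagOp s))))]
      rw [hWdef]
      simp only [← Finset.sum_neg_distrib]
      refine Finset.sum_congr rfl fun p _ => Finset.sum_congr rfl fun q _ =>
        Finset.sum_congr rfl fun r _ => Finset.sum_congr rfl fun s _ => ?_
      have hc : S r q p s = S p q r s := by
        rw [h12 r q p s, h23 q r p s, h12 q p r s]
      rw [hc, show eOp (n := n) r * (eOp p * (dagOp q * dagOp s))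
          = (eOp r * eOp p) * (dagOp q * dagOp s) from (mul_assoc _ _ _).symm,
        e_mul_comm, show -(eOp (n := n) p * eOp r) * (dagOp q * dagOp s)
          = -(eOp p * eOp r * (dagOp q * dagOp s)) from neg_mul (eOp (n := n) p * eOp r) (dagOp q * dagOp s), mul_assoc]
      exact smul_neg _ _
    have h2 : (2 : ℂ) • W = 0 := by
      rw [two_smul]
      nth_rewrite 2 [h]
      exact add_neg_cancel W
    have : W = (2⁻¹ : ℂ) • ((2 : ℂ) • W) := by rw [smul_smul]; norm_num
    rw [this, h2, smul_zero]
  rw [hP, hW, sub_zero]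

end mainaux


/-- Let `S α β γ δ = σ(𝔕(ε_α, ε_β) ε_γ, ε_δ)` be the coefficient tensor of a curvature term
`𝔕`, assumed totally symmetric in its four arguments. Then in the Clifford realization
`π_a(x_{αβ}) = ε_α ε_β† − sign(αβ) ε_{−β} ε_{−α}†` on the exterior algebra, the curvature
endomorphism `Σ_{α,β} sign(α) π_a(x_{αβ} 𝔕(ε_{−α}, ε_β))`, whose coefficient expansion is
`(1/2) Σ_{α,β,δ,γ} sign(α) sign(δ) S(−α, β, γ, −δ) π_a(x_{αβ}) π_a(x_{δγ})`, vanishes. -/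
theorem curvature_endomorphism_vanishes (n : ℕ)
    (S : Idx n → Idx n → Idx n → Idx n → ℂ)
    (hswap12 : ∀ p q r s, S p q r s = S q p r s)
    (hswap23 : ∀ p q r s, S p q r s = S p r q s)
    (hswap34 : ∀ p q r s, S p q r s = S p q s r)
    (X : Idx n → Idx n → Module.End ℂ (ExteriorAlgebra ℂ (Idx n → ℂ)))
    (hX : ∀ α β, X α β = epsOp α * dagOp β - sgn (α.1 * β.1) • (epsOp β.negI * dagOp α.negI)) :
    (1 / 2 : ℂ) • ∑ α : Idx n, ∑ β : Idx n, ∑ δ : Idx n, ∑ γ : Idx n,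
        (sgn α.1 * sgn δ.1 * S α.negI β γ δ.negI) • (X α β * X δ γ) = 0 := by
  have hY : ∀ p q : Idx n, sgn p.1 • X p.negI q = eOp p * dagOp q + eOp q * dagOp p := by
    intro p q
    rw [hX, Idx.negI_negI]
    rw [show ((p.negI : Idx n).1 * q.1) = -(p.1 * q.1) by rw [Idx.negI_val]; ring]
    rw [sgn_neg (mul_ne_zero p.ne_zero q.ne_zero), sgn_mul p.ne_zero q.ne_zero]
    rw [smul_sub, smul_smul]
    rw [show sgn p.1 * -(sgn p.1 * sgn q.1) = -sgn q.1 by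
      rw [show sgn p.1 * -(sgn p.1 * sgn q.1) = -((sgn p.1 * sgn p.1) * sgn q.1) by ring,
        sgn_mul_self]; ring]
    rw [neg_smul, sub_neg_eq_add]
    unfold eOp
    rw [smul_mul_assoc, smul_mul_assoc]
  rw [show (∑ α : Idx n, ∑ β : Idx n, ∑ δ : Idx n, ∑ γ : Idx n,
      (sgn α.1 * sgn δ.1 * S α.negI β γ δ.negI) • (X α β * X δ γ))
    = ∑ p : Idx n, ∑ q : Idx n, ∑ r : Idx n, ∑ s : Idx n, S p q r s •
        ((eOp p * dagOp q + eOp q * dagOp p) * (eOp r * dagOp s + eOp s * dagOp r)) from ?_]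
  · -- expand and apply main_aux to the four pieces
    have expand : ∀ p q r s : Idx n, S p q r s •
        ((eOp (n := n) p * dagOp q + eOp q * dagOp p) * (eOp r * dagOp s + eOp s * dagOp r))
      = S p q r s • (eOp p * (dagOp q * (eOp r * dagOp s)))
        + S p q r s • (eOp p * (dagOp q * (eOp s * dagOp r)))
        + (S p q r s • (eOp q * (dagOp p * (eOp r * dagOp s)))
        + S p q r s • (eOp q * (dagOp p * (eOp s * dagOp r)))) := by
      intro p q r s
      simp only [add_mul, mul_add, smul_add, mul_assoc]
      abel
    simp only [expand, Finset.sum_add_distrib]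
    have h12' : ∀ p q r s : Idx n, S p q s r = S q p s r := fun p q r s => hswap12 p q s r
    have h23' : ∀ p q r s : Idx n, S p q s r = S p r s q := by
      intro p q r s
      rw [hswap23 p q s r, hswap34 p s q r, ← hswap23 p r s q]
    have h34' : ∀ p q r s : Idx n, S p q s r = S p q r s := fun p q r s => (hswap34 p q r s).symm
    have T1 : (∑ p : Idx n, ∑ q : Idx n, ∑ r : Idx n, ∑ s : Idx n,
        S p q r s • (eOp (n := n) p * (dagOp q * (eOp r * dagOp s)))) = 0 :=
      main_aux S hswap12 hswap23 hswap34
    have T2 : (∑ p : Idx n, ∑ q : Idx n, ∑ r : Idx n, ∑ s : Idx n,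
        S p q r s • (eOp (n := n) p * (dagOp q * (eOp s * dagOp r)))) = 0 := by
      rw [sum4_swap34 (fun p q r s => S p q r s • (eOp (n := n) p * (dagOp q * (eOp s * dagOp r))))]
      exact main_aux (fun p q r s => S p q s r) h12' h23' h34'
    have T3 : (∑ p : Idx n, ∑ q : Idx n, ∑ r : Idx n, ∑ s : Idx n,
        S p q r s • (eOp (n := n) q * (dagOp p * (eOp r * dagOp s)))) = 0 := by
      rw [sum4_swap12 (fun p q r s => S p q r s • (eOp (n := n) q * (dagOp p * (eOp r * dagOp s))))]
      calc (∑ p : Idx n, ∑ q : Idx n, ∑ r : Idx n, ∑ s : Idx n,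
          S q p r s • (eOp (n := n) p * (dagOp q * (eOp r * dagOp s))))
          = ∑ p : Idx n, ∑ q : Idx n, ∑ r : Idx n, ∑ s : Idx n,
            S p q r s • (eOp (n := n) p * (dagOp q * (eOp r * dagOp s))) := by
            refine Finset.sum_congr rfl fun p _ => Finset.sum_congr rfl fun q _ =>
              Finset.sum_congr rfl fun r _ => Finset.sum_congr rfl fun s _ => ?_
            rw [← hswap12 p q r s]
        _ = 0 := T1
    have T4 : (∑ p : Idx n, ∑ q : Idx n, ∑ r : Idx n, ∑ s : Idx n,
        S p q r s • (eOp (n := n) q * (dagOp p * (eOp s * dagOp r)))) = 0 := by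
      rw [sum4_swap12 (fun p q r s => S p q r s • (eOp (n := n) q * (dagOp p * (eOp s * dagOp r)))),
        sum4_swap34 (fun p q r s => S q p r s • (eOp (n := n) p * (dagOp q * (eOp s * dagOp r))))]
      calc (∑ p : Idx n, ∑ q : Idx n, ∑ r : Idx n, ∑ s : Idx n,
          S q p s r • (eOp (n := n) p * (dagOp q * (eOp r * dagOp s))))
          = ∑ p : Idx n, ∑ q : Idx n, ∑ r : Idx n, ∑ s : Idx n,
            S p q s r • (eOp (n := n) p * (dagOp q * (eOp r * dagOp s))) := by
            refine Finset.sum_congr rfl fun p _ => Finset.sum_congr rfl fun q _ =>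
              Finset.sum_congr rfl fun r _ => Finset.sum_congr rfl fun s _ => ?_
            rw [← hswap12 p q s r]
        _ = 0 := main_aux (fun p q r s => S p q s r) h12' h23' h34'
    rw [T1, T2, T3, T4]
    simp
  · -- the reindexing step
    refine Fintype.sum_equiv (negE n) _ _ fun α => ?_
    refine Finset.sum_congr rfl fun β _ => ?_
    refine Fintype.sum_equiv (negE n) _ _ fun δ => ?_
    refine Finset.sum_congr rfl fun γ _ => ?_
    show (sgn α.1 * sgn δ.1 * S α.negI β γ δ.negI) • (X α β * X δ γ)
      = S α.negI β δ.negI γ • ((eOp α.negI * dagOp β + eOp β * dagOp α.negI) *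
          (eOp δ.negI * dagOp γ + eOp γ * dagOp δ.negI))
    rw [← hY α.negI β, ← hY δ.negI γ, Idx.negI_negI, Idx.negI_negI]
    rw [smul_mul_assoc, mul_smul_comm, smul_smul, smul_smul]
    rw [hswap34 α.negI β γ δ.negI]
    congr 1
    rw [Idx.negI_val, Idx.negI_val, sgn_neg α.ne_zero, sgn_neg δ.ne_zero]
    ring
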